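/- Let φ be a state with free cumulant generating function R satisfying R(z) = Σᵢ zᵢ² + higher order terms and the second-order equation DᵢDⱼR = δᵢⱼ + Σₜ Bᵢⱼᵗ DₜR + Σ_{s,t} C_{ij}^{st} DₛR DₜR in non-commuting variables. Then the third free cumulants are given by R[xⱼ xᵢ xₜ] = Bᵢⱼᵗ, and the fourth free cumulants by R[xⱼ xᵢ x_c x_d] = Σₜ Bᵢⱼᵗ B_{ct}^d + C_{ij}^{cd}. -/
import Mathlib


/-- A non-commutative formal power series in `z₁,…,zₙ` over `ℝ`, given by its
coefficient function on words. -/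
abbrev NCS (n : ℕ) := List (Fin n) → ℝ

/-- Product of non-commutative power series (convolution over splittings of the word). -/
noncomputable def ncsMul {n : ℕ} (F G : NCS n) : NCS n := fun w =>
  ∑ k ∈ Finset.range (w.length + 1), F (w.take k) * G (w.drop k)

/-- Left partial derivative `Dᵢ`. -/
def ncsD {n : ℕ} (i : Fin n) (F : NCS n) : NCS n := fun w => F (i :: w)

/-- The series `zᵢ`. -/
def ncsZ {n : ℕ} (i : Fin n) : NCS n := fun w => if w = [i] then 1 else 0

/-- The series `1 + M`. -/
def onePlus {n : ℕ} (M : NCS n) : NCS n := fun w => (if w = [] then 1 else 0) + M w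

/-- Auxiliary fuelled definition of composition `R(V₁(z),…,Vₙ(z))` of non-commutative
power series, for tuples `V` with vanishing constant terms. -/
noncomputable def ncsCompAux {n : ℕ} (V : Fin n → NCS n) : ℕ → NCS n → NCS n
  | 0, R => fun w => if w = [] then R [] else 0
  | (fuel + 1), R => fun w =>
      if w = [] then R []
      else ∑ i : Fin n, ∑ k ∈ Finset.range w.length,
        V i (w.take (k + 1)) * ncsCompAux V fuel (fun v => R (i :: v)) (w.drop (k + 1))

/-- Composition `R(V₁(z),…,Vₙ(z))` of non-commutative power series. -/
noncomputable def ncsComp {n : ℕ} (R : NCS n) (V : Fin n → NCS n) : NCS n :=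
  fun w => ncsCompAux V w.length R w

/-- The tuple `w ↦ wᵢ(1 + M(w))`: the substitution appearing in the
moment–cumulant relation `R(w₁(1+M(w)),…,wₙ(1+M(w))) = M(w)`. -/
def zTimesOnePlus {n : ℕ} (M : NCS n) (i : Fin n) : NCS n := fun w =>
  match w with
  | [] => 0
  | (j :: t) => if j = i then (if t = [] then 1 else 0) + M t else 0

/-- if the free cumulant generating function `R = Σᵢ zᵢ² + h.o.t.` satisfies
`DᵢDⱼR = δᵢⱼ + Σₜ Bᵢⱼᵗ DₜR + Σ_{s,t} C_{ij}^{st} DₛR DₜR`, then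
`R[xⱼxᵢxₜ] = Bᵢⱼᵗ` and `R[xⱼxᵢx_c x_d] = Σₜ Bᵢⱼᵗ B_{ct}^d + C_{ij}^{cd}`. -/
theorem cumulants_from_second_order_equation (n : ℕ) (R : NCS n)
    (B : Fin n → Fin n → Fin n → ℝ) (C : Fin n → Fin n → Fin n → Fin n → ℝ)
    (hR0 : R [] = 0) (hR1 : ∀ i : Fin n, R [i] = 0)
    (hR2 : ∀ i j : Fin n, R [i, j] = if i = j then 1 else 0)
    (heq : ∀ (i j : Fin n) (w : List (Fin n)),
      R (j :: i :: w)
        = (if i = j ∧ w = [] then (1 : ℝ) else 0)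
          + (∑ t : Fin n, B i j t * R (t :: w))
          + (∑ s : Fin n, ∑ t : Fin n,
              C i j s t * ncsMul (ncsD s R) (ncsD t R) w)) :
    (∀ i j t : Fin n, R [j, i, t] = B i j t)
    ∧ (∀ i j c d : Fin n,
        R [j, i, c, d] = (∑ t : Fin n, B i j t * B c t d) + C i j c d) := by
  have h3 : ∀ i j t : Fin n, R [j, i, t] = B i j t := by
    intro i j t
    rw [heq]
    simp [ncsMul, ncsD, hR1, hR2, hR0, Finset.sum_range_succ, mul_ite,
      Finset.sum_ite_eq']
  refine ⟨h3, fun i j c d => ?_⟩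
  rw [heq]
  have hmul : ∀ s t : Fin n, ncsMul (ncsD s R) (ncsD t R) [c, d]
      = (if s = c then 1 else 0) * (if t = d then 1 else 0) := by
    intro s t
    simp [ncsMul, ncsD, hR1, hR2, hR0, Finset.sum_range_succ, h3]
  simp only [hmul, h3]
  have : (∑ s : Fin n, ∑ t : Fin n,
      C i j s t * ((if s = c then (1:ℝ) else 0) * (if t = d then 1 else 0)))
      = C i j c d := by
    simp [mul_ite, Finset.sum_ite_eq']
  rw [this]
  simp
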